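/- Riordan array recurrence via A-sequence: let t(n,k) = [z^{n-k}] C(z(1-z+z^2))^{k+1} and let a(j) be the coefficients of A(z) = 2z^3/(-1 + z^2 + sqrt(1-2z^2+4z^3-3z^4)). Then for all n, k ≥ 0: t(n+1, k+1) = sum_{j ≥ 0} a(j) * t(n, k+j) (a finite sum since t(n,m) = 0 for m > n). -/

import Mathlib

open PowerSeries

private lemma key_approx (T A : PowerSeries ℚ)
    (hT : (X - X^2 + X^3) * T^2 + 1 = T)
    (hA : (X - 1) * A^2 - (X^2 - 1) * A + X^3 = 0)
    (hA0 : constantCoeff A = 1) (n : ℕ) :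
    (X : ℚ⟦X⟧)^(n+1) ∣
      T - ∑ j ∈ Finset.range (n+1), (coeff j A) • (X * T)^j := by
  have hT0 : constantCoeff T = 1 := by
    have := congrArg (constantCoeff) hT
    simpa using this.symm
  set P : Polynomial ℚ := trunc (n+1) A with hP
  set B : ℚ⟦X⟧ := ∑ j ∈ Finset.range (n+1), (coeff j A) • (X * T)^j with hBdef
  have hPB : Polynomial.aeval (X * T : ℚ⟦X⟧) P = B := by
    rw [Polynomial.aeval_eq_sum_range' (natDegree_trunc_lt A n) (X * T : ℚ⟦X⟧)]
    refine Finset.sum_congr rfl fun j hj => ?_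
    rw [Finset.mem_range] at hj
    rw [PowerSeries.coeff_trunc, if_pos hj]
  -- A agrees with its truncation up to degree n
  have h1 : (X : ℚ⟦X⟧)^(n+1) ∣ A - (P : ℚ⟦X⟧) := by
    rw [X_pow_dvd_iff]
    intro m hm
    simp only [map_sub, Polynomial.coeff_coe, hP, coeff_trunc, if_pos hm, sub_self]
  -- the polynomial quadratic relation modulo X^(n+1)
  have h2 : (X : ℚ⟦X⟧)^(n+1) ∣
      ((X - 1) * (P : ℚ⟦X⟧)^2 - (X^2 - 1) * (P : ℚ⟦X⟧) + X^3) := by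
    have hE : ((X - 1) * (P : ℚ⟦X⟧)^2 - (X^2 - 1) * (P : ℚ⟦X⟧) + X^3)
        = (A - (P : ℚ⟦X⟧)) * (-((X - 1) * (A + (P : ℚ⟦X⟧)) - (X^2 - 1))) := by
      linear_combination hA
    rw [hE]
    exact h1.mul_right _
  -- transfer to a polynomial divisibility
  set QP : Polynomial ℚ := (Polynomial.X - 1) * P^2 - (Polynomial.X^2 - 1) * P
      + Polynomial.X^3 with hQP
  have hQPcoe : ((QP : Polynomial ℚ) : ℚ⟦X⟧)
      = (X - 1) * (P : ℚ⟦X⟧)^2 - (X^2 - 1) * (P : ℚ⟦X⟧) + X^3 := by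
    simp [hQP, Polynomial.coe_sub, Polynomial.coe_add, Polynomial.coe_mul,
      Polynomial.coe_pow, Polynomial.coe_X, Polynomial.coe_one]
  have h3 : Polynomial.X^(n+1) ∣ QP := by
    rw [Polynomial.X_pow_dvd_iff]
    intro d hd
    rw [X_pow_dvd_iff] at h2
    have := h2 d hd
    rw [← hQPcoe] at this
    rwa [Polynomial.coeff_coe] at this
  -- apply aeval at X*T
  obtain ⟨q, hq⟩ := h3
  have h4 : (X * T : ℚ⟦X⟧)^(n+1) ∣
      ((X*T - 1) * B^2 - ((X*T)^2 - 1) * B + (X*T)^3) := by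
    refine ⟨Polynomial.aeval (X * T : ℚ⟦X⟧) q, ?_⟩
    have := congrArg (Polynomial.aeval (X * T : ℚ⟦X⟧)) hq
    simpa [hQP, hPB, map_mul, map_pow, map_sub, map_add, map_one] using this
  -- T satisfies the same quadratic
  have hT2 : (X*T - 1) * T^2 - ((X*T)^2 - 1) * T + (X*T)^3 = 0 := by
    linear_combination T * hT
  -- combine
  have h5 : (X : ℚ⟦X⟧)^(n+1) ∣
      (B - T) * ((X*T - 1) * (B + T) - ((X*T)^2 - 1)) := by
    have hfac : (B - T) * ((X*T - 1) * (B + T) - ((X*T)^2 - 1))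
        = (X*T - 1) * B^2 - ((X*T)^2 - 1) * B + (X*T)^3 := by
      linear_combination -hT2
    rw [hfac]
    exact dvd_trans (by rw [mul_pow]; exact Dvd.intro _ rfl) h4
  set U : ℚ⟦X⟧ := (X*T - 1) * (B + T) - ((X*T)^2 - 1) with hU
  have hUunit : IsUnit U := by
    rw [PowerSeries.isUnit_iff_constantCoeff]
    have hB0 : constantCoeff B = 1 := by
      rw [hBdef, map_sum]
      rw [Finset.sum_eq_single 0]
      · simp [hA0]
      · intro j hj hj0
        simp [zero_pow hj0]
      · simp
    have : constantCoeff U = -1 := by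
      simp [hU, hB0, hT0]
    rw [this]
    exact isUnit_one.neg
  have h6 : (X : ℚ⟦X⟧)^(n+1) ∣ (B - T) := (hUunit.dvd_mul_right).mp h5
  have := h6.neg_right
  simpa [neg_sub] using this

/-- Riordan array recurrence via the `A`-sequence: with
`t(n,k) = [z^n](z^k C(z(1-z+z^2))^{k+1})` and `a(j)` the coefficients of
`A(z) = 2z^3/(-1 + z^2 + sqrt(1-2z^2+4z^3-3z^4))` (characterized by
`(z-1)A^2 - (z^2-1)A + z^3 = 0`, `A(0) = 1`), for all `n, k ≥ 0`:
`t(n+1, k+1) = ∑_{j ≥ 0} a(j) t(n, k+j)` (a finite sum since `t(n,m) = 0` for `m > n`). -/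
theorem riordan_A_sequence_recurrence (T A : PowerSeries ℚ)
    (hT : (X - X^2 + X^3) * T^2 + 1 = T)
    (hA : (X - 1) * A^2 - (X^2 - 1) * A + X^3 = 0)
    (hA0 : constantCoeff A = 1)
    (t : ℕ → ℕ → ℚ)
    (ht : ∀ n k, t n k = coeff n (X ^ k * T ^ (k + 1))) :
    ∀ n k : ℕ,
      t (n + 1) (k + 1) = ∑' j : ℕ, coeff j A * t n (k + j) := by
  intro n k
  -- the tsum is a finite sum
  have hvanish : ∀ j ∉ Finset.range (n+1), coeff j A * t n (k + j) = 0 := by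
    intro j hj
    rw [Finset.mem_range, not_lt] at hj
    have : coeff n (X ^ (k+j) * T ^ (k+j+1)) = 0 := by
      have hdvd : (X : ℚ⟦X⟧)^(n+1) ∣ X ^ (k+j) * T ^ (k+j+1) :=
        dvd_mul_of_dvd_left (pow_dvd_pow _ (by omega)) _
      exact (X_pow_dvd_iff.mp hdvd) n (Nat.lt_succ_self n)
    rw [ht, this, mul_zero]
  rw [tsum_eq_sum hvanish]
  -- rewrite both sides as coefficients
  have hLHS : t (n+1) (k+1) = coeff n (X ^ k * T ^ (k+1) * T) := by
    rw [ht]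
    have : (X : ℚ⟦X⟧) ^ (k+1) * T ^ (k+1+1) = X * (X ^ k * T ^ (k+1) * T) := by
      ring
    rw [this, coeff_succ_X_mul]
  have hterm : ∀ j, coeff j A * t n (k + j)
      = coeff n ((coeff j A) • (X ^ k * T ^ (k+1) * (X*T)^j)) := by
    intro j
    rw [ht, map_smul, smul_eq_mul]
    congr 2
    rw [pow_add, mul_pow]
    ring
  calc t (n+1) (k+1) = coeff n (X ^ k * T ^ (k+1) * T) := hLHS
    _ = coeff n (X ^ k * T ^ (k+1)
          * ∑ j ∈ Finset.range (n+1), (coeff j A) • (X * T)^j) := by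
        have hdvd := key_approx T A hT hA hA0 n
        obtain ⟨r, hr⟩ := hdvd
        have : X ^ k * T ^ (k+1) * T
            - X ^ k * T ^ (k+1)
              * ∑ j ∈ Finset.range (n+1), (coeff j A) • (X * T)^j
            = X^(n+1) * (X ^ k * T ^ (k+1) * r) := by
          rw [← mul_sub, hr]; ring
        have hz : coeff n ((X:ℚ⟦X⟧)^(n+1) * (X ^ k * T ^ (k+1) * r)) = 0 :=
          (X_pow_dvd_iff.mp (Dvd.intro _ rfl)) n (Nat.lt_succ_self n)
        have := congrArg (coeff n) this
        rw [map_sub, hz, sub_eq_zero] at this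
        exact this
    _ = ∑ j ∈ Finset.range (n+1), coeff j A * t n (k + j) := by
        rw [Finset.mul_sum, map_sum]
        refine Finset.sum_congr rfl fun j _ => ?_
        rw [mul_smul_comm]
        exact (hterm j).symm
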